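/- If θ : ℝ → ℝ is differentiable on all of ℝ and satisfies θ' ≤ -θ²/2 everywhere, then θ ≡ 0. -/

import Mathlib

/-- Auxiliary: a global solution of `θ' ≤ -θ²/2` is never negative. -/
theorem raychaudhuri_aux_nonneg (θ : ℝ → ℝ)
    (hθ : Differentiable ℝ θ)
    (hineq : ∀ t, deriv θ t ≤ -(θ t) ^ 2 / 2) :
    ∀ t, 0 ≤ θ t := by
  intro a
  by_contra h
  push_neg at h
  have hanti : Antitone θ := by
    apply antitone_of_deriv_nonpos hθ
    intro t
    have := hineq t
    nlinarith [sq_nonneg (θ t)]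
  have hneg : ∀ t ∈ Set.Ici a, θ t < 0 := fun t ht => lt_of_le_of_lt (hanti ht) h
  set g : ℝ → ℝ := fun t => (θ t)⁻¹ - t / 2 with hg
  have hd : ∀ t ∈ Set.Ici a, HasDerivAt g (-(deriv θ t) / (θ t) ^ 2 - 1 / 2) t := by
    intro t ht
    have h1 : HasDerivAt (fun s => (θ s)⁻¹) (-(deriv θ t) / (θ t) ^ 2) t :=
      (hθ t).hasDerivAt.inv (hneg t ht).ne
    have h2 : HasDerivAt (fun s : ℝ => s / 2) (1 / 2) t := by
      simpa using (hasDerivAt_id t).div_const 2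
    exact h1.sub h2
  have hmono : MonotoneOn g (Set.Ici a) := by
    apply monotoneOn_of_deriv_nonneg (convex_Ici a)
    · exact fun t ht => (hd t ht).continuousAt.continuousWithinAt
    · intro t ht
      rw [interior_Ici] at ht
      exact ((hd t (Set.Ioi_subset_Ici_self ht)).differentiableAt).differentiableWithinAt
    · intro t ht
      rw [interior_Ici] at ht
      rw [(hd t (Set.Ioi_subset_Ici_self ht)).deriv]
      have h1 := hineq t
      have h2 : (0:ℝ) < (θ t) ^ 2 := pow_two_pos_of_ne_zero (hneg t (Set.Ioi_subset_Ici_self ht)).ne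
      rw [sub_nonneg, le_div_iff₀ h2]
      nlinarith
  set b : ℝ := a - 2 * (θ a)⁻¹ with hb
  have hainv : (θ a)⁻¹ < 0 := inv_lt_zero.mpr h
  have hab : a ≤ b := by simp only [hb]; linarith
  have hgb : g a ≤ g b := hmono Set.self_mem_Ici hab hab
  have hbinv : (θ b)⁻¹ < 0 := inv_lt_zero.mpr (hneg b hab)
  simp only [hg, hb] at hgb
  linarith

/-- A global solution of the Raychaudhuri inequality `θ' ≤ -θ²/2` on all of `ℝ` must
vanish identically. -/
theorem raychaudhuri_global_vanishes (θ : ℝ → ℝ)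
    (hθ : Differentiable ℝ θ)
    (hineq : ∀ t, deriv θ t ≤ -(θ t) ^ 2 / 2) :
    ∀ t, θ t = 0 := by
  have h1 := raychaudhuri_aux_nonneg θ hθ hineq
  set φ : ℝ → ℝ := fun t => -θ (-t) with hφ
  have hdφ : ∀ t, HasDerivAt φ (deriv θ (-t)) t := by
    intro t
    have h2 : HasDerivAt (fun s : ℝ => θ (-s)) (deriv θ (-t) * (-1)) t :=
      (hθ (-t)).hasDerivAt.comp t (hasDerivAt_neg t)
    have := h2.neg
    simpa [hφ, Pi.neg_def] using this
  have h2 := raychaudhuri_aux_nonneg φ (fun t => (hdφ t).differentiableAt) ?_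
  · intro t
    have ha := h1 t
    have hbneg := h2 (-t)
    simp only [hφ, neg_neg] at hbneg
    linarith
  · intro t
    rw [(hdφ t).deriv]
    have := hineq (-t)
    simp only [hφ]
    nlinarith
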